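/- Let ℓ be a prime number and let H ⊆ GL₂(ℤ/ℓℤ) be any subgroup. If SL₂(ℤ/ℓℤ) is not contained in H, then ℓ ≤ [GL₂(ℤ/ℓℤ) : H]. -/

import Mathlib

open scoped MatrixGroups
open Matrix

section Gen

variable {F : Type*} [Field F]

def Emat (t : F) : Matrix.SpecialLinearGroup (Fin 2) F :=
  ⟨!![1, t; 0, 1], by simp [Matrix.det_fin_two_of]⟩

def Emat' (t : F) : Matrix.SpecialLinearGroup (Fin 2) F :=
  ⟨!![1, 0; t, 1], by simp [Matrix.det_fin_two_of]⟩

theorem mem_closure_E_of (x : Matrix.SpecialLinearGroup (Fin 2) F)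
    (hc : x.1 1 0 ≠ 0) :
    x ∈ Subgroup.closure (Set.range (Emat (F := F)) ∪ Set.range (Emat' (F := F))) := by
  set T := Subgroup.closure (Set.range (Emat (F := F)) ∪ Set.range (Emat' (F := F))) with hT
  have hE : ∀ t : F, Emat t ∈ T := fun t => Subgroup.subset_closure (Or.inl ⟨t, rfl⟩)
  have hE' : ∀ t : F, Emat' t ∈ T := fun t => Subgroup.subset_closure (Or.inr ⟨t, rfl⟩)
  set a := x.1 0 0 with ha
  set b := x.1 0 1 with hb
  set c := x.1 1 0 with hcdef
  set d := x.1 1 1 with hd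
  have hdet : a * d - b * c = 1 := by
    rw [ha, hb, hcdef, hd, ← Matrix.det_fin_two]
    exact x.2
  have hx : x.1 = !![a, b; c, d] := Matrix.eta_fin_two x.1
  have key : Emat' (-c) * (Emat ((1 - a) * c⁻¹) * x) = Emat (b + (1 - a) * c⁻¹ * d) := by
    ext i j
    simp only [Matrix.SpecialLinearGroup.coe_mul]
    simp only [Emat, Emat', hx]
    fin_cases i <;> fin_cases j <;>
      simp [Matrix.mul_apply, Fin.sum_univ_two]
    all_goals field_simp
    all_goals try ring
    all_goals linear_combination hdet
  have hxeq : x = (Emat ((1 - a) * c⁻¹))⁻¹ * ((Emat' (-c))⁻¹ * Emat (b + (1 - a) * c⁻¹ * d)) := by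
    rw [← key]
    group
  rw [hxeq]
  exact mul_mem (inv_mem (hE _)) (mul_mem (inv_mem (hE' _)) (hE _))

theorem mem_closure_E (x : Matrix.SpecialLinearGroup (Fin 2) F) :
    x ∈ Subgroup.closure (Set.range (Emat (F := F)) ∪ Set.range (Emat' (F := F))) := by
  by_cases hc : x.1 1 0 ≠ 0
  · exact mem_closure_E_of x hc
  push_neg at hc
  have hE' : ∀ t : F, Emat' t ∈ Subgroup.closure
      (Set.range (Emat (F := F)) ∪ Set.range (Emat' (F := F))) :=
    fun t => Subgroup.subset_closure (Or.inr ⟨t, rfl⟩)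
  have ha : x.1 0 0 ≠ 0 := by
    intro h0
    have hdet : x.1 0 0 * x.1 1 1 - x.1 0 1 * x.1 1 0 = 1 := by
      rw [← Matrix.det_fin_two]; exact x.2
    rw [h0, hc] at hdet
    simp at hdet
  have hy : ((Emat' 1 * x : Matrix.SpecialLinearGroup (Fin 2) F)).1 1 0 ≠ 0 := by
    have : (Emat' (1 : F) * x).1 = !![(1:F), 0; 1, 1] * x.1 := by
      simp only [Matrix.SpecialLinearGroup.coe_mul]
      simp [Emat']
    rw [this]
    simp [Matrix.mul_apply, Fin.sum_univ_two, hc]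
    exact ha
  have := mem_closure_E_of _ hy
  have hxeq : x = (Emat' 1)⁻¹ * (Emat' 1 * x) := by group
  rw [hxeq]
  exact mul_mem (inv_mem (hE' _)) this

theorem Emat_mul (s t : F) : Emat s * Emat t = Emat (s + t) := by
  ext i j
  simp only [Matrix.SpecialLinearGroup.coe_mul]
  simp only [Emat]
  fin_cases i <;> fin_cases j <;>
    simp [Matrix.mul_apply, Fin.sum_univ_two, add_comm]

theorem Emat'_mul (s t : F) : Emat' s * Emat' t = Emat' (s + t) := by
  ext i j
  simp only [Matrix.SpecialLinearGroup.coe_mul]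
  simp only [Emat']
  fin_cases i <;> fin_cases j <;>
    simp [Matrix.mul_apply, Fin.sum_univ_two, add_comm]

theorem Emat_zero : Emat (0 : F) = 1 := by
  ext i j
  fin_cases i <;> fin_cases j <;> simp [Emat, Matrix.one_fin_two]

theorem Emat'_zero : Emat' (0 : F) = 1 := by
  ext i j
  fin_cases i <;> fin_cases j <;> simp [Emat', Matrix.one_fin_two]

theorem Emat_pow (t : F) (n : ℕ) : (Emat t) ^ n = Emat (n * t) := by
  induction n with
  | zero => simpa using Emat_zero.symm
  | succ n ih => rw [pow_succ, ih, Emat_mul]; push_cast; ring_nf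

theorem Emat'_pow (t : F) (n : ℕ) : (Emat' t) ^ n = Emat' (n * t) := by
  induction n with
  | zero => simpa using Emat'_zero.symm
  | succ n ih => rw [pow_succ, ih, Emat'_mul]; push_cast; ring_nf

end Gen

/-- `SL₂(R)` viewed as a subgroup of `GL₂(R)`. -/
def SL2subgroup (R : Type*) [CommRing R] : Subgroup (GL (Fin 2) R) :=
  (Matrix.SpecialLinearGroup.toGL (n := Fin 2) (R := R)).range

/-- Let `ℓ` be a prime and `H ⊆ GL₂(ℤ/ℓℤ)` any subgroup.  If `SL₂(ℤ/ℓℤ)` is not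
contained in `H`, then `ℓ ≤ [GL₂(ℤ/ℓℤ) : H]`. -/
theorem statement9 (ℓ : ℕ) (hℓ : ℓ.Prime) (H : Subgroup (GL (Fin 2) (ZMod ℓ)))
    (h : ¬ SL2subgroup (ZMod ℓ) ≤ H) : ℓ ≤ H.index := by
  haveI : Fact ℓ.Prime := ⟨hℓ⟩
  by_contra hlt
  push_neg at hlt
  set G := GL (Fin 2) (ZMod ℓ)
  haveI : Fintype (G ⧸ H) := Fintype.ofFinite _
  haveI : DecidableEq (G ⧸ H) := Classical.decEq _
  -- the normal core has index dividing Nat.factorial H.index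
  have hdvd : H.normalCore.index ∣ Nat.factorial H.index := by
    rw [Subgroup.normalCore_eq_ker, Subgroup.index_ker]
    calc Nat.card (MulAction.toPermHom G (G ⧸ H)).range
        ∣ Nat.card (Equiv.Perm (G ⧸ H)) :=
          Subgroup.card_subgroup_dvd_card _
      _ = Nat.factorial H.index := by
          rw [Nat.card_eq_fintype_card, Fintype.card_perm, Subgroup.index,
            Nat.card_eq_fintype_card]
  have hnd : ¬ ℓ ∣ H.normalCore.index := by
    intro hd
    have := (Nat.Prime.dvd_factorial hℓ).mp (hd.trans hdvd)
    omega
  -- every element of order dividing ℓ lies in the normal core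
  have key : ∀ g : G, g ^ ℓ = 1 → g ∈ H.normalCore := by
    intro g hg
    haveI : H.normalCore.Normal := Subgroup.normalCore_normal H
    rw [← QuotientGroup.eq_one_iff (N := H.normalCore) g]
    have h1 : ((g : G ⧸ H.normalCore)) ^ ℓ = 1 := by
      rw [← QuotientGroup.mk_pow, hg, QuotientGroup.mk_one]
    have h2 : orderOf ((g : G ⧸ H.normalCore)) ∣ ℓ := orderOf_dvd_of_pow_eq_one h1
    have h3 : orderOf ((g : G ⧸ H.normalCore)) ∣ H.normalCore.index := by
      rw [Subgroup.index]
      exact orderOf_dvd_natCard _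
    rcases (Nat.Prime.eq_one_or_self_of_dvd hℓ _ h2) with h4 | h4
    · exact orderOf_eq_one_iff.mp h4
    · rw [h4] at h3
      exact absurd h3 hnd
  -- the two elementary generators land in the normal core
  have hE1 : Matrix.SpecialLinearGroup.toGL (Emat (1 : ZMod ℓ)) ∈ H.normalCore := by
    apply key
    rw [← map_pow, Emat_pow]
    simp [Emat_zero]
  have hE'1 : Matrix.SpecialLinearGroup.toGL (Emat' (1 : ZMod ℓ)) ∈ H.normalCore := by
    apply key
    rw [← map_pow, Emat'_pow]
    simp [Emat'_zero]
  have hEt : ∀ t : ZMod ℓ, Matrix.SpecialLinearGroup.toGL (Emat t) ∈ H.normalCore := by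
    intro t
    have : Emat t = (Emat (1 : ZMod ℓ)) ^ t.val := by
      rw [Emat_pow, mul_one, ZMod.natCast_zmod_val]
    rw [this, map_pow]
    exact pow_mem hE1 _
  have hE't : ∀ t : ZMod ℓ, Matrix.SpecialLinearGroup.toGL (Emat' t) ∈ H.normalCore := by
    intro t
    have : Emat' t = (Emat' (1 : ZMod ℓ)) ^ t.val := by
      rw [Emat'_pow, mul_one, ZMod.natCast_zmod_val]
    rw [this, map_pow]
    exact pow_mem hE'1 _
  -- hence SL₂ ⊆ normal core ⊆ H
  have hSL : SL2subgroup (ZMod ℓ) ≤ H.normalCore := by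
    rintro g ⟨x, rfl⟩
    have hx := mem_closure_E x
    have hmap : Matrix.SpecialLinearGroup.toGL x ∈
        Subgroup.map (Matrix.SpecialLinearGroup.toGL (n := Fin 2) (R := ZMod ℓ))
          (Subgroup.closure (Set.range Emat ∪ Set.range Emat')) :=
      Subgroup.mem_map_of_mem _ hx
    rw [MonoidHom.map_closure] at hmap
    refine (Subgroup.closure_le H.normalCore).mpr ?_ hmap
    rintro y ⟨z, hz, rfl⟩
    rcases hz with ⟨t, rfl⟩ | ⟨t, rfl⟩
    · exact hEt t
    · exact hE't t
  exact h (hSL.trans H.normalCore_le)
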